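/- arXiv:2107.04896 — 3 statements merged into one kernel-verified Lean document; each statement's English description precedes it below -/
import Mathlib

section
/- For ℝ_4, an element u = [u₁,u₂,u₃,u₄] is a zero divisor if and only if (u₁² - u₃² + 2u₂u₄)² + (u₄² - u₂² + 2u₁u₃)² = 0, i.e., det ς(u) = (u₁² - u₃² + 2u₂u₄)² + (u₄² - u₂² + 2u₁u₃)². -/
open Matrix MeasureTheory Filter

noncomputable def gmat (n : ℕ) : Matrix (Fin n) (Fin n) ℝ :=
  Matrix.of fun i j => if (j : ℕ) = (i : ℕ) + 1 then 1
    else if (i : ℕ) = n - 1 ∧ (j : ℕ) = 0 then (-1) else 0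

noncomputable def sig (n : ℕ) (u : Fin n → ℝ) : Matrix (Fin n) (Fin n) ℝ :=
  ∑ ℓ : Fin n, u ℓ • gmat n ^ (ℓ : ℕ)

noncomputable def emul (n : ℕ) [NeZero n] (u v : Fin n → ℝ) : Fin n → ℝ :=
  fun j => (sig n u * sig n v) 0 j

noncomputable def einv (n : ℕ) [NeZero n] (u : Fin n → ℝ) : Fin n → ℝ :=
  fun j => (sig n u)⁻¹ 0 j

noncomputable def pd2 (n : ℕ) (h : (Fin n → ℝ) → ℝ) (i : Fin n) (a : Fin n → ℝ) : ℝ :=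
  lineDeriv ℝ (fun x => lineDeriv ℝ h x (Pi.single i 1)) a (Pi.single i 1)

lemma gmat4_eq : gmat 4 = !![0,1,0,0; 0,0,1,0; 0,0,0,1; (-1),0,0,0] := by
  ext i j
  fin_cases i <;> fin_cases j <;>
    simp [gmat, Matrix.vecHead, Matrix.vecTail, Function.comp] <;> decide

lemma sig4_eq (u : Fin 4 → ℝ) :
    sig 4 u = !![u 0, u 1, u 2, u 3;
                 -u 3, u 0, u 1, u 2;
                 -u 2, -u 3, u 0, u 1;
                 -u 1, -u 2, -u 3, u 0] := by
  have h2 : gmat 4 ^ 2 = !![0,0,1,0; 0,0,0,1; (-1),0,0,0; 0,(-1),0,0] := by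
    rw [pow_two, gmat4_eq]
    ext i j
    fin_cases i <;> fin_cases j <;>
      simp [Matrix.mul_apply, Fin.sum_univ_four, Matrix.vecHead, Matrix.vecTail, Function.comp]
  have h3 : gmat 4 ^ 3 = !![0,0,0,1; (-1),0,0,0; 0,(-1),0,0; 0,0,(-1),0] := by
    rw [pow_succ, h2, gmat4_eq]
    ext i j
    fin_cases i <;> fin_cases j <;>
      simp [Matrix.mul_apply, Fin.sum_univ_four, Matrix.vecHead, Matrix.vecTail, Function.comp]
  rw [sig, Fin.sum_univ_four]
  rw [show ((0 : Fin 4) : ℕ) = 0 from rfl, show ((1 : Fin 4) : ℕ) = 1 from rfl,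
    show ((2 : Fin 4) : ℕ) = 2 from rfl, show ((3 : Fin 4) : ℕ) = 3 from rfl,
    pow_zero, pow_one, h2, h3, gmat4_eq]
  ext i j
  fin_cases i <;> fin_cases j <;>
    simp [Matrix.one_apply, Matrix.vecHead, Matrix.vecTail, Function.comp]

lemma commute_sig (n : ℕ) (u v : Fin n → ℝ) : Commute (sig n u) (sig n v) := by
  apply Commute.sum_left
  intro i _
  apply Commute.sum_right
  intro j _
  exact ((Commute.refl (gmat n)).pow_pow _ _).smul_left _ |>.smul_right _

theorem det_sig_R4_formula (u : Fin 4 → ℝ) :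
    (sig 4 u).det =
      (u 0 ^ 2 - u 2 ^ 2 + 2 * u 1 * u 3) ^ 2 +
      (u 3 ^ 2 - u 1 ^ 2 + 2 * u 0 * u 2) ^ 2 ∧
    ((∃ y : Fin 4 → ℝ, y ≠ 0 ∧ emul 4 u y = 0) ↔
      (u 0 ^ 2 - u 2 ^ 2 + 2 * u 1 * u 3) ^ 2 +
      (u 3 ^ 2 - u 1 ^ 2 + 2 * u 0 * u 2) ^ 2 = 0) := by
  have hdet : (sig 4 u).det =
      (u 0 ^ 2 - u 2 ^ 2 + 2 * u 1 * u 3) ^ 2 +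
      (u 3 ^ 2 - u 1 ^ 2 + 2 * u 0 * u 2) ^ 2 := by
    rw [sig4_eq]
    simp [Matrix.det_succ_row_zero, Fin.sum_univ_succ, Fin.succAbove, Matrix.vecHead,
      Matrix.vecTail, Function.comp, Fin.castSucc, Fin.castAdd, Fin.castLE]
    ring
  refine ⟨hdet, ?_⟩
  rw [← hdet, ← Matrix.exists_vecMul_eq_zero_iff]
  have key : ∀ y : Fin 4 → ℝ, emul 4 u y = Matrix.vecMul y (sig 4 u) := by
    intro y
    funext j
    rw [emul, (commute_sig 4 u y).eq, Matrix.mul_apply, Matrix.vecMul, dotProduct]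
    congr 1
    funext k
    rw [sig4_eq u]
    congr 1
    rw [sig4_eq y]
    fin_cases k <;> simp
  constructor
  · rintro ⟨y, hy, h⟩
    exact ⟨y, hy, by rw [← key]; exact h⟩
  · rintro ⟨y, hy, h⟩
    exact ⟨y, hy, by rw [key]; exact h⟩
end

section
/- The measure ν_n defined by ν_n(E) = ∫_E |det ς(x)|⁻¹ dμ_n(x) on Borel subsets of G_n is left-invariant: ν_n(aE) = ν_n(E) for every a ∈ G_n and Borel set E ⊆ G_n. -/
open Matrix MeasureTheory Filter

section Aux

variable (n : ℕ) [NeZero n]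

lemma gmat_pow_zero_apply : ∀ {ℓ : ℕ}, ℓ < n → ∀ (j : Fin n),
    (gmat n ^ ℓ) 0 j = if (j : ℕ) = ℓ then 1 else 0 := by
  intro ℓ
  induction ℓ with
  | zero =>
    intro _ j
    have h0 : ((0 : Fin n) : ℕ) = 0 := rfl
    rw [pow_zero, Matrix.one_apply]
    exact if_congr (by rw [Fin.ext_iff, h0]; exact eq_comm) rfl rfl
  | succ ℓ ih =>
    intro hℓ j
    have hℓ' : ℓ < n := by omega
    rw [pow_succ, Matrix.mul_apply]
    have key : ∀ k : Fin n, (gmat n ^ ℓ) 0 k * gmat n k j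
        = if k = (⟨ℓ, hℓ'⟩ : Fin n) then gmat n k j else 0 := by
      intro k
      rw [ih hℓ' k]
      by_cases h : k = (⟨ℓ, hℓ'⟩ : Fin n)
      · subst h; simp
      · have : (k : ℕ) ≠ ℓ := fun hc => h (Fin.ext hc)
        simp [this, h]
    rw [Finset.sum_congr rfl fun k _ => key k]
    rw [Finset.sum_ite_eq' Finset.univ (⟨ℓ, hℓ'⟩ : Fin n) (fun k => gmat n k j)]
    simp only [Finset.mem_univ, if_true]
    have hne : ℓ ≠ n - 1 := by omega
    simp [gmat, hne]

lemma sig_zero_apply (u : Fin n → ℝ) (j : Fin n) : sig n u 0 j = u j := by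
  unfold sig
  rw [Matrix.sum_apply]
  have : ∀ ℓ : Fin n, (u ℓ • gmat n ^ (ℓ : ℕ)) 0 j = if ℓ = j then u ℓ else 0 := by
    intro ℓ
    rw [Matrix.smul_apply, gmat_pow_zero_apply n ℓ.isLt j]
    by_cases h : ℓ = j
    · subst h; simp
    · have : (j : ℕ) ≠ (ℓ : ℕ) := fun hc => h (Fin.ext hc.symm)
      simp [this, h]
  rw [Finset.sum_congr rfl fun ℓ _ => this ℓ, Finset.sum_ite_eq' Finset.univ j u]
  simp

lemma commute_gmat_sig (u : Fin n → ℝ) : Commute (gmat n) (sig n u) := by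
  unfold sig
  refine Commute.sum_right _ _ _ fun ℓ _ => ?_
  exact ((Commute.refl (gmat n)).pow_right (ℓ : ℕ)).smul_right (u ℓ)

lemma row_eq_mul_pow {M : Matrix (Fin n) (Fin n) ℝ} (hM : Commute (gmat n) M)
    (i j : Fin n) : M i j = ∑ k, M 0 k * (gmat n ^ (i : ℕ)) k j := by
  have h1 : (gmat n ^ (i : ℕ) * M) 0 j = M i j := by
    rw [Matrix.mul_apply]
    have key : ∀ k : Fin n, (gmat n ^ (i : ℕ)) 0 k * M k j
        = if k = i then M k j else 0 := by
      intro k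
      rw [gmat_pow_zero_apply n i.isLt k]
      by_cases h : k = i
      · subst h; simp
      · have : (k : ℕ) ≠ (i : ℕ) := fun hc => h (Fin.ext hc)
        simp [this, h]
    rw [Finset.sum_congr rfl fun k _ => key k,
      Finset.sum_ite_eq' Finset.univ i (fun k => M k j)]
    simp
  have h2 : gmat n ^ (i : ℕ) * M = M * gmat n ^ (i : ℕ) := (hM.pow_left _).eq
  rw [← h1, h2, Matrix.mul_apply]

lemma eq_of_row_zero_eq {M N : Matrix (Fin n) (Fin n) ℝ}
    (hM : Commute (gmat n) M) (hN : Commute (gmat n) N)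
    (h : ∀ j, M 0 j = N 0 j) : M = N := by
  ext i j
  rw [row_eq_mul_pow n hM i j, row_eq_mul_pow n hN i j]
  simp only [h]

lemma sig_emul (a y : Fin n → ℝ) : sig n (emul n a y) = sig n a * sig n y := by
  refine eq_of_row_zero_eq n (commute_gmat_sig n _)
    ((commute_gmat_sig n a).mul_right (commute_gmat_sig n y)) fun j => ?_
  rw [sig_zero_apply]
  rfl

lemma sig_comm (u v : Fin n → ℝ) : Commute (sig n u) (sig n v) := by
  unfold sig
  refine Commute.sum_left _ _ _ fun ℓ _ => Commute.sum_right _ _ _ fun m _ => ?_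
  exact (((Commute.refl (gmat n)).pow_pow (ℓ : ℕ) (m : ℕ)).smul_left (u ℓ)).smul_right (v m)

lemma emul_eq_mulVec (a y : Fin n → ℝ) : emul n a y = (sig n a)ᵀ *ᵥ y := by
  funext j
  show (sig n a * sig n y) 0 j = _
  rw [(sig_comm n a y).eq, Matrix.mul_apply]
  rw [Matrix.mulVec, dotProduct]
  refine Finset.sum_congr rfl fun k _ => ?_
  rw [sig_zero_apply, Matrix.transpose_apply, mul_comm]

end Aux

theorem haar_measure_left_invariant (n : ℕ) (hn : 2 ≤ n) :
    haveI : NeZero n := ⟨by omega⟩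
    ∀ (a : Fin n → ℝ), (sig n a).det ≠ 0 →
    ∀ (E : Set (Fin n → ℝ)), MeasurableSet E →
      E ⊆ {x | (sig n x).det ≠ 0} →
      ∫⁻ x in (fun y => emul n a y) '' E, ENNReal.ofReal |(sig n x).det|⁻¹ =
        ∫⁻ x in E, ENNReal.ofReal |(sig n x).det|⁻¹ := by
  haveI : NeZero n := ⟨by omega⟩
  intro a ha E hE hEsub
  set M : Matrix (Fin n) (Fin n) ℝ := (sig n a)ᵀ with hM
  have hMdet : M.det ≠ 0 := by rwa [hM, Matrix.det_transpose]
  set L : (Fin n → ℝ) →L[ℝ] (Fin n → ℝ) :=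
    LinearMap.toContinuousLinearMap (Matrix.toLin' M) with hL
  have hLy : ∀ y, L y = emul n a y := by
    intro y
    rw [emul_eq_mulVec, hL]
    simp [Matrix.toLin'_apply]
    rfl
  have hfun : (fun y => emul n a y) = fun y => L y := by
    funext y; rw [hLy]
  have hdetL : L.det = (sig n a).det := by
    have : L.det = LinearMap.det (Matrix.toLin' M) := rfl
    rw [this, LinearMap.det_toLin', hM, Matrix.det_transpose]
  have hinj : Set.InjOn (fun y => L y) E := by
    intro x _ y _ hxy
    simp only [hLy] at hxy
    rw [emul_eq_mulVec, emul_eq_mulVec] at hxy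
    rw [← hM] at hxy
    have := congrArg (fun v => M⁻¹ *ᵥ v) hxy
    simpa [Matrix.mulVec_mulVec, Matrix.nonsing_inv_mul M (isUnit_iff_ne_zero.mpr hMdet),
      Matrix.one_mulVec] using this
  rw [hfun, lintegral_image_eq_lintegral_abs_det_fderiv_mul volume hE
    (fun x _ => L.hasFDerivAt.hasFDerivWithinAt) hinj]
  refine setLIntegral_congr_fun hE (fun y hy => ?_)
  have hy' : (sig n y).det ≠ 0 := hEsub hy
  rw [hLy, sig_emul, Matrix.det_mul, hdetL]
  rw [← ENNReal.ofReal_mul (abs_nonneg _)]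
  congr 1
  rw [abs_mul, mul_inv, ← mul_assoc, mul_inv_cancel₀ (abs_ne_zero.mpr ha), one_mul]
end

section
/- If f : Ω → ℝ^{2k} is differentiable at a in the sense that the limit of (f(a+δ) - f(a)) ⊛ δ⁻¹ exists as δ → 0 through the units G_{2k}, then its component functions satisfy the generalized Cauchy–Riemann equations: ∂f_m/∂x_i = ∂f_{m+k}/∂x_{i+k} and ∂f_{m+k}/∂x_i = -∂f_m/∂x_{i+k} for all 1 ≤ m, i ≤ k. -/
open Matrix MeasureTheory Filter

lemma gmat_apply (n : ℕ) (i j : Fin n) :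
    gmat n i j = if (j : ℕ) = (i : ℕ) + 1 then 1
      else if (i : ℕ) = n - 1 ∧ (j : ℕ) = 0 then (-1) else 0 := rfl

lemma gmat_pow_apply {n : ℕ} (ℓ : ℕ) (hℓ : ℓ ≤ n) (i j : Fin n) :
    (gmat n ^ ℓ) i j =
      if (j : ℕ) = (i : ℕ) + ℓ then 1
      else if (i : ℕ) + ℓ = n + (j : ℕ) then -1 else 0 := by
  have hi := i.isLt; have hj := j.isLt
  induction ℓ generalizing i with
  | zero =>
    simp only [pow_zero, Matrix.one_apply, Nat.add_zero]
    rcases eq_or_ne i j with h | h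
    · subst h; simp
    · rw [if_neg h, if_neg (fun hh => h (Fin.ext hh).symm), if_neg (by omega)]
  | succ ℓ ih =>
    have hℓn : ℓ ≤ n := by omega
    rw [pow_succ', Matrix.mul_apply]
    by_cases hcase : (i : ℕ) + 1 < n
    · set b : Fin n := ⟨(i:ℕ)+1, hcase⟩ with hb
      rw [Finset.sum_eq_single b]
      · rw [gmat_apply, ih hℓn b b.isLt]
        have h1 : ((b:ℕ) = (i:ℕ) + 1) := rfl
        rw [if_pos h1, one_mul]
        have hb1 : (b:ℕ) + ℓ = (i:ℕ) + (ℓ+1) := by simp [hb]; omega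
        rw [hb1]
      · intro p _ hp
        rw [gmat_apply, if_neg, if_neg, zero_mul]
        · rintro ⟨h1, -⟩; omega
        · intro h1; exact hp (Fin.ext (by simpa using h1))
      · intro h; exact absurd (Finset.mem_univ b) h
    · have hin : (i : ℕ) = n - 1 := by omega
      have hn0 : 0 < n := by omega
      set b : Fin n := ⟨0, hn0⟩ with hb
      rw [Finset.sum_eq_single b]
      · rw [gmat_apply, ih hℓn b b.isLt]
        rw [if_neg (show ¬((0:ℕ) = (i:ℕ)+1) by omega), if_pos ⟨hin, rfl⟩]
        have hb0 : (b : ℕ) = 0 := rfl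
        rw [hb0]
        split_ifs <;> first | omega | ring
      · intro p _ hp
        rw [gmat_apply, if_neg (by omega), if_neg, zero_mul]
        rintro ⟨-, h2⟩; exact hp (Fin.ext (by simpa using h2))
      · intro h; exact absurd (Finset.mem_univ b) h

lemma gmat_pow_n (n : ℕ) : gmat n ^ n = -1 := by
  ext i j
  rw [gmat_pow_apply n le_rfl i j]
  have hi := i.isLt; have hj := j.isLt
  rcases eq_or_ne i j with h | h
  · subst h; rw [if_neg (by omega), if_pos (by omega)]; simp
  · have hne : (i:ℕ) ≠ (j:ℕ) := fun hh => h (Fin.ext hh)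
    rw [if_neg (by omega), if_neg (by omega)]
    simp [Matrix.one_apply, h]


lemma sig_apply_zero {n : ℕ} [NeZero n] (u : Fin n → ℝ) (m : Fin n) :
    sig n u 0 m = u m := by
  rw [sig, Matrix.sum_apply]
  rw [Finset.sum_eq_single m]
  · rw [Matrix.smul_apply, gmat_pow_apply _ m.isLt.le]
    simp only [Fin.val_zero, Nat.zero_add]
    simp
  · intro p _ hp
    rw [Matrix.smul_apply, gmat_pow_apply _ p.isLt.le]
    simp only [Fin.val_zero, Nat.zero_add]
    rw [if_neg (fun hh => hp (Fin.ext hh.symm)), if_neg (by have := p.isLt; omega), smul_zero]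
  · intro h; exact absurd (Finset.mem_univ m) h

lemma sig_smul_single {n : ℕ} [NeZero n] (c : ℝ) (j : Fin n) :
    sig n (c • (Pi.single j 1 : Fin n → ℝ)) = c • gmat n ^ (j : ℕ) := by
  rw [sig]
  rw [Finset.sum_eq_single j]
  · simp
  · intro p _ hp; simp [Pi.single_apply, hp]
  · intro h; exact absurd (Finset.mem_univ j) h

lemma sig_row_zero_smul_pow {n : ℕ} [NeZero n] (c : ℝ) (ℓ : ℕ) (hℓ : ℓ < n) :
    sig n (fun m => (c • gmat n ^ ℓ) 0 m) = c • gmat n ^ ℓ := by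
  have hv : (fun m => (c • gmat n ^ ℓ) 0 m) = c • (Pi.single ⟨ℓ, hℓ⟩ 1 : Fin n → ℝ) := by
    funext m
    rw [Matrix.smul_apply, gmat_pow_apply _ hℓ.le]
    have hm := m.isLt
    simp only [Fin.val_zero, Nat.zero_add]
    rw [Pi.smul_apply, Pi.single_apply]
    by_cases hm' : (m : ℕ) = ℓ
    · rw [if_pos hm', if_pos (Fin.ext hm')]
    · rw [if_neg hm', if_neg (by omega), if_neg (fun hh => hm' (by rw [hh])), smul_zero]
  rw [hv, sig_smul_single]

lemma gmat_smul_pow_right_inv {n : ℕ} [NeZero n] (t : ℝ) (ht : t ≠ 0) (j : Fin n) :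
    (t • gmat n ^ (j : ℕ)) * ((-t⁻¹) • gmat n ^ (n - (j : ℕ))) = 1 := by
  rw [Matrix.smul_mul, Matrix.mul_smul, smul_smul, ← pow_add]
  have : (j : ℕ) + (n - (j : ℕ)) = n := by have := j.isLt; omega
  rw [this, gmat_pow_n]
  rw [mul_neg, mul_inv_cancel₀ ht]
  simp

lemma sig_det_ne_zero {n : ℕ} [NeZero n] (t : ℝ) (ht : t ≠ 0) (j : Fin n) :
    ((t • gmat n ^ (j : ℕ)).det) ≠ 0 := by
  have := Matrix.isUnit_det_of_right_inverse (gmat_smul_pow_right_inv t ht j)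
  exact this.ne_zero

lemma key_identity {n : ℕ} [NeZero n] (f : (Fin n → ℝ) → (Fin n → ℝ)) (a : Fin n → ℝ)
    (t : ℝ) (ht : t ≠ 0) (j m : Fin n) :
    ∑ p, (emul n (f (a + t • (Pi.single j 1 : Fin n → ℝ)) - f a)
        (einv n (t • (Pi.single j 1 : Fin n → ℝ)))) p * (gmat n ^ (j:ℕ)) p m
      = t⁻¹ * (f (a + t • (Pi.single j 1 : Fin n → ℝ)) m - f a m) := by
  set δ : Fin n → ℝ := t • (Pi.single j 1 : Fin n → ℝ) with hδ
  set Δ : Fin n → ℝ := f (a + δ) - f a with hΔ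
  have hsigδ : sig n δ = t • gmat n ^ (j:ℕ) := sig_smul_single t j
  have hrinv := gmat_smul_pow_right_inv t ht j
  have hinv : (sig n δ)⁻¹ = (-t⁻¹) • gmat n ^ (n - (j:ℕ)) :=
    Matrix.inv_eq_right_inv (by rw [hsigδ]; exact hrinv)
  have hdet : IsUnit (sig n δ).det := by
    rw [hsigδ]; exact Matrix.isUnit_det_of_right_inverse hrinv
  have hsiginv : sig n (einv n δ) = (sig n δ)⁻¹ := by
    have heinv : einv n δ = fun q => ((sig n δ)⁻¹) 0 q := rfl
    rw [heinv, hinv]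
    by_cases hj : (j : ℕ) = 0
    · have hrw : (-t⁻¹ : ℝ) • gmat n ^ (n - (j:ℕ)) = t⁻¹ • gmat n ^ 0 := by
        rw [hj, Nat.sub_zero, gmat_pow_n, pow_zero]
        simp
      rw [hrw]
      exact sig_row_zero_smul_pow t⁻¹ 0 (Nat.pos_of_ne_zero (NeZero.ne n))
    · exact sig_row_zero_smul_pow (-t⁻¹) (n - (j:ℕ)) (by have := j.isLt; omega)
  have hstep : ∀ p, emul n Δ (einv n δ) p = (sig n Δ * (sig n δ)⁻¹) 0 p := by
    intro p; rw [emul, hsiginv]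
  have hsum : ∑ p, (emul n Δ (einv n δ)) p * (gmat n ^ (j:ℕ)) p m
      = ((sig n Δ * (sig n δ)⁻¹) * gmat n ^ (j:ℕ)) 0 m := by
    rw [Matrix.mul_apply]
    exact Finset.sum_congr rfl (fun p _ => by rw [hstep p])
  have hmulinv : (sig n δ)⁻¹ * gmat n ^ (j:ℕ) = t⁻¹ • (1 : Matrix (Fin n) (Fin n) ℝ) := by
    have h1 : (sig n δ)⁻¹ * sig n δ = 1 := Matrix.nonsing_inv_mul _ hdet
    rw [hsigδ, Matrix.mul_smul] at h1
    rw [hsigδ]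
    calc (t • gmat n ^ (j:ℕ))⁻¹ * gmat n ^ (j:ℕ)
        = t⁻¹ • (t • ((t • gmat n ^ (j:ℕ))⁻¹ * gmat n ^ (j:ℕ))) := by
          rw [smul_smul, inv_mul_cancel₀ ht, one_smul]
      _ = t⁻¹ • (1 : Matrix (Fin n) (Fin n) ℝ) := by rw [h1]
  rw [hsum, mul_assoc, hmulinv, Matrix.mul_smul, mul_one, Matrix.smul_apply,
    sig_apply_zero, smul_eq_mul]
  rfl

lemma hasLineDerivAt_component {n : ℕ} [NeZero n]
    (f : (Fin n → ℝ) → (Fin n → ℝ)) (a L : Fin n → ℝ)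
    (hL : Tendsto (fun δ => emul n (f (a + δ) - f a) (einv n δ))
        (nhdsWithin 0 {δ : Fin n → ℝ | (sig n δ).det ≠ 0}) (nhds L))
    (j m : Fin n) :
    HasLineDerivAt ℝ (fun x => f x m) (∑ p, L p * (gmat n ^ (j:ℕ)) p m) a
      (Pi.single j 1) := by
  rw [hasLineDerivAt_iff_tendsto_slope_zero]
  have hpath : Tendsto (fun t : ℝ => t • (Pi.single j 1 : Fin n → ℝ))
      (nhdsWithin 0 {(0:ℝ)}ᶜ)
      (nhdsWithin 0 {δ : Fin n → ℝ | (sig n δ).det ≠ 0}) := by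
    rw [tendsto_nhdsWithin_iff]
    constructor
    · have hc : Continuous (fun t : ℝ => t • (Pi.single j 1 : Fin n → ℝ)) :=
        continuous_id.smul continuous_const
      have h0 := hc.tendsto 0
      simp only [zero_smul] at h0
      exact h0.mono_left nhdsWithin_le_nhds
    · filter_upwards [self_mem_nhdsWithin] with t ht
      have ht' : t ≠ 0 := ht
      show (sig n _).det ≠ 0
      rw [sig_smul_single t j]
      exact sig_det_ne_zero t ht' j
  have hcomp := hL.comp hpath
  have hsumlim : Tendsto (fun t : ℝ => ∑ p,
        (emul n (f (a + t • (Pi.single j 1 : Fin n → ℝ)) - f a)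
          (einv n (t • (Pi.single j 1 : Fin n → ℝ)))) p * (gmat n ^ (j:ℕ)) p m)
      (nhdsWithin 0 {(0:ℝ)}ᶜ) (nhds (∑ p, L p * (gmat n ^ (j:ℕ)) p m)) := by
    apply tendsto_finset_sum
    intro p _
    exact ((tendsto_pi_nhds.mp hcomp) p).mul tendsto_const_nhds
  apply hsumlim.congr'
  filter_upwards [self_mem_nhdsWithin] with t ht
  have ht' : t ≠ 0 := ht
  rw [key_identity f a t ht' j m]
  simp [smul_eq_mul]

theorem cauchy_riemann_of_differentiable (k : ℕ) (hk : 1 ≤ k)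
    (Ω : Set (Fin (k + k) → ℝ)) (hΩ : IsOpen Ω)
    (f : (Fin (k + k) → ℝ) → (Fin (k + k) → ℝ))
    (a : Fin (k + k) → ℝ) (ha : a ∈ Ω)
    (hdiff : haveI : NeZero (k + k) := ⟨by omega⟩
      ∃ L : Fin (k + k) → ℝ,
        Filter.Tendsto (fun δ => emul (k + k) (f (a + δ) - f a) (einv (k + k) δ))
          (nhdsWithin 0 {δ : Fin (k + k) → ℝ | (sig (k + k) δ).det ≠ 0}) (nhds L)) :
    ∀ m i : Fin k,
      lineDeriv ℝ (fun x => f x (Fin.castAdd k m)) a (Pi.single (Fin.castAdd k i) 1) =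
        lineDeriv ℝ (fun x => f x (Fin.natAdd k m)) a (Pi.single (Fin.natAdd k i) 1) ∧
      lineDeriv ℝ (fun x => f x (Fin.natAdd k m)) a (Pi.single (Fin.castAdd k i) 1) =
        - lineDeriv ℝ (fun x => f x (Fin.castAdd k m)) a (Pi.single (Fin.natAdd k i) 1) := by
  haveI : NeZero (k + k) := ⟨by omega⟩
  obtain ⟨L, hL⟩ := hdiff
  intro m i
  have H : ∀ (j m' : Fin (k + k)),
      lineDeriv ℝ (fun x => f x m') a (Pi.single j 1)
        = ∑ p, L p * (gmat (k+k) ^ (j:ℕ)) p m' :=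
    fun j m' => (hasLineDerivAt_component f a L hL j m').lineDeriv
  have hp' : ∀ p : Fin (k+k), (p:ℕ) < k + k := fun p => p.isLt
  have hm := m.isLt; have hi := i.isLt
  constructor
  · rw [H (Fin.castAdd k i) (Fin.castAdd k m), H (Fin.natAdd k i) (Fin.natAdd k m)]
    apply Finset.sum_congr rfl
    intro p _
    have hp := hp' p
    rw [gmat_pow_apply _ (Fin.castAdd k i).isLt.le, gmat_pow_apply _ (Fin.natAdd k i).isLt.le]
    simp only [Fin.coe_castAdd, Fin.coe_natAdd]
    congr 1
    apply if_congr (by omega) rfl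
    apply if_congr (by omega) rfl rfl
  · rw [H (Fin.castAdd k i) (Fin.natAdd k m), H (Fin.natAdd k i) (Fin.castAdd k m)]
    rw [← Finset.sum_neg_distrib]
    apply Finset.sum_congr rfl
    intro p _
    have hp := hp' p
    rw [gmat_pow_apply _ (Fin.castAdd k i).isLt.le, gmat_pow_apply _ (Fin.natAdd k i).isLt.le]
    simp only [Fin.coe_castAdd, Fin.coe_natAdd]
    split_ifs <;> first | omega | ring
end
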